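/- arXiv:2105.03481 — 5 statements merged into one kernel-verified Lean document; each statement's English description precedes it below -/
import Mathlib

section
/- Let Z be a standard normal random variable on ℝ and let g : ℝ → ℝ be continuously differentiable with E|g'(Z)| < ∞ and E|Z g(Z)| < ∞. Then E[g'(Z) - Z g(Z)] = 0. -/
open MeasureTheory ProbabilityTheory Real Filter
open scoped NNReal ENNReal

lemma phi_eq : gaussianPDFReal 0 1 = fun x => (Real.sqrt (2 * π))⁻¹ * Real.exp (-x ^ 2 / 2) := by
  funext x
  simp [gaussianPDFReal]

lemma hasDerivAt_phi (x : ℝ) :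
    HasDerivAt (gaussianPDFReal 0 1) (-x * gaussianPDFReal 0 1 x) x := by
  rw [phi_eq]
  have h1 : HasDerivAt (fun x : ℝ => -x ^ 2 / 2) (-x) x := by
    have := ((hasDerivAt_pow 2 x).neg.div_const 2)
    simpa using this.congr_deriv (by ring)
  have := (h1.exp).const_mul (Real.sqrt (2 * π))⁻¹
  exact this.congr_deriv (by ring)

lemma integrable_gaussian_iff (F : ℝ → ℝ) :
    Integrable F (gaussianReal 0 1) ↔
      Integrable (fun x => gaussianPDFReal 0 1 x * F x) volume := by
  rw [gaussianReal_of_var_ne_zero 0 one_ne_zero]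
  have hm : Measurable fun x => Real.toNNReal (gaussianPDFReal 0 1 x) :=
    (measurable_gaussianPDFReal 0 1).real_toNNReal
  rw [show gaussianPDF 0 1 = fun x => ((Real.toNNReal (gaussianPDFReal 0 1 x) : ℝ≥0) : ℝ≥0∞) from rfl]
  rw [integrable_withDensity_iff_integrable_smul hm]
  congr! 1 with x
  ext x
  simp [NNReal.smul_def, Real.coe_toNNReal _ (gaussianPDFReal_nonneg 0 1 x)]

lemma integral_gaussian_eq (F : ℝ → ℝ) :
    ∫ x, F x ∂(gaussianReal 0 1) = ∫ x, gaussianPDFReal 0 1 x * F x := by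
  rw [gaussianReal_of_var_ne_zero 0 one_ne_zero]
  have hm : Measurable fun x => Real.toNNReal (gaussianPDFReal 0 1 x) :=
    (measurable_gaussianPDFReal 0 1).real_toNNReal
  rw [show gaussianPDF 0 1 = fun x => ((Real.toNNReal (gaussianPDFReal 0 1 x) : ℝ≥0) : ℝ≥0∞) from rfl]
  rw [integral_withDensity_eq_integral_smul hm]
  congr 1
  funext x
  simp [NNReal.smul_def, Real.coe_toNNReal _ (gaussianPDFReal_nonneg 0 1 x)]

/-- Stein identity for the standard normal distribution on ℝ. -/
theorem stein_identity_standard_normal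
    (g : ℝ → ℝ) (hg : ContDiff ℝ 1 g)
    (hint1 : Integrable (fun x => deriv g x) (gaussianReal 0 1))
    (hint2 : Integrable (fun x => x * g x) (gaussianReal 0 1)) :
    ∫ x, (deriv g x - x * g x) ∂(gaussianReal 0 1) = 0 := by
  set φ := gaussianPDFReal 0 1 with hφ
  have hgd : Differentiable ℝ g := hg.differentiable one_ne_zero
  have hf : ∀ x, HasDerivAt (fun x => g x * φ x) ((deriv g x - x * g x) * φ x) x := by
    intro x
    have := (hgd x).hasDerivAt.mul (hasDerivAt_phi x)
    exact this.congr_deriv (by ring)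
  have hf' : Integrable (fun x => (deriv g x - x * g x) * φ x) volume := by
    have h := (integrable_gaussian_iff fun x => deriv g x - x * g x).mp (hint1.sub hint2)
    exact h.congr (ae_of_all _ fun x => mul_comm _ _)
  obtain ⟨M, hM⟩ := (isCompact_Icc : IsCompact (Set.Icc (-1:ℝ) 1)).exists_bound_of_continuousOn
    hg.continuous.continuousOn
  have hMnn : (0:ℝ) ≤ M := le_trans (norm_nonneg (g 0)) (hM 0 (by norm_num))
  have hxg : Integrable (fun x => φ x * (x * g x)) volume :=
    (integrable_gaussian_iff _).mp hint2
  have hdom : Integrable (fun x => M * φ x + |φ x * (x * g x)|) volume :=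
    ((integrable_gaussianPDFReal 0 1).const_mul M).add hxg.abs
  have hfInt : Integrable (fun x => g x * φ x) volume := by
    refine hdom.mono' ?_ (ae_of_all _ fun x => ?_)
    · exact hg.continuous.aestronglyMeasurable.mul
        (stronglyMeasurable_gaussianPDFReal 0 1).aestronglyMeasurable
    · have hφnn : 0 ≤ φ x := gaussianPDFReal_nonneg 0 1 x
      rw [Real.norm_eq_abs, abs_mul, abs_of_nonneg hφnn]
      rcases le_total |x| 1 with hx | hx
      · have h1 : |g x| ≤ M := hM x (abs_le.mp hx)
        have : |g x| * φ x ≤ M * φ x := mul_le_mul_of_nonneg_right h1 hφnn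
        exact this.trans (le_add_of_nonneg_right (abs_nonneg _))
      · have : |g x| * φ x ≤ |φ x * (x * g x)| := by
          rw [abs_mul, abs_mul, abs_of_nonneg hφnn]
          calc |g x| * φ x = φ x * (1 * |g x|) := by ring
          _ ≤ φ x * (|x| * |g x|) :=
            mul_le_mul_of_nonneg_left (mul_le_mul_of_nonneg_right hx (abs_nonneg _)) hφnn
        exact this.trans (le_add_of_nonneg_left (by positivity))
  have hzero := integral_eq_zero_of_hasDerivAt_of_integrable hf hf' hfInt
  rw [integral_gaussian_eq]
  have heq : (∫ x, φ x * (deriv g x - x * g x)) = ∫ x, (deriv g x - x * g x) * φ x :=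
    integral_congr_ae (ae_of_all _ fun x => mul_comm _ _)
  exact heq.trans hzero
end

section
/- Let P be the exponential distribution with rate λ > 0 and let g₀ : [0,∞) → ℝ be continuously differentiable with x g₀(x) e^{-λx} → 0 as x → ∞ and such that x ↦ x g₀'(x) + (1 - λx) g₀(x) is integrable against P. Then E_{X∼Exp(λ)}[X g₀'(X) + (1 - λX) g₀(X)] = 0. -/
open MeasureTheory Real Set Filter

/-- Stein identity for the operator `(T₁ g₀)(x) = x g₀'(x) + (1 - λx) g₀(x)` under the
exponential distribution with rate `l > 0`, requiring no boundary condition at `0`. -/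
theorem stein_identity_exponential_T1
    (l : ℝ) (hl : 0 < l) (g₀ : ℝ → ℝ)
    (hg : ContDiffOn ℝ 1 g₀ (Ici 0))
    (hlim : Tendsto (fun x => x * g₀ x * exp (-l * x)) atTop (nhds 0))
    (hint : IntegrableOn
      (fun x => (x * deriv g₀ x + (1 - l * x) * g₀ x) * (l * exp (-l * x))) (Ici 0)) :
    ∫ x in Ici 0, (x * deriv g₀ x + (1 - l * x) * g₀ x) * (l * exp (-l * x)) = 0 := by
  set F : ℝ → ℝ := fun x => x * g₀ x * exp (-l * x) with hF
  set F' : ℝ → ℝ := fun x => (x * deriv g₀ x + (1 - l * x) * g₀ x) * exp (-l * x) with hF'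
  have hderiv : ∀ x ∈ Ioi (0:ℝ), HasDerivAt F (F' x) x := by
    intro x hx
    have hmem : Ici (0:ℝ) ∈ nhds x := Ici_mem_nhds hx
    have hgd : HasDerivAt g₀ (deriv g₀ x) x := by
      have : ContDiffAt ℝ 1 g₀ x := hg.contDiffAt hmem
      exact (this.differentiableAt one_ne_zero).hasDerivAt
    have h1 : HasDerivAt (fun x => x * g₀ x) (1 * g₀ x + x * deriv g₀ x) x :=
      (hasDerivAt_id x).mul hgd
    have h2 : HasDerivAt (fun x => exp (-l * x)) ((-l) * exp (-l * x)) x := by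
      have := ((hasDerivAt_id x).const_mul (-l)).exp
      simpa [mul_comm] using this
    have := h1.mul h2
    refine this.congr_deriv ?_
    simp only [hF']
    ring
  have hcont : ContinuousWithinAt F (Ici 0) 0 := by
    have hg₀c : ContinuousWithinAt g₀ (Ici 0) 0 := (hg.continuousOn) 0 (by simp)
    exact (continuousWithinAt_id.mul hg₀c).mul
      ((Real.continuous_exp.comp (continuous_const.mul continuous_id)).continuousWithinAt)
  have hF'int : IntegrableOn F' (Ioi 0) := by
    have h : IntegrableOn (fun x => l⁻¹ • ((x * deriv g₀ x + (1 - l * x) * g₀ x) *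
        (l * exp (-l * x)))) (Ici 0) := hint.smul l⁻¹
    have heq : (fun x => l⁻¹ • ((x * deriv g₀ x + (1 - l * x) * g₀ x) *
        (l * exp (-l * x)))) = F' := by
      funext x
      simp only [hF', smul_eq_mul]
      field_simp
    rw [heq] at h
    exact h.mono_set Ioi_subset_Ici_self
  have key : ∫ x in Ioi 0, F' x = 0 - F 0 :=
    integral_Ioi_of_hasDerivAt_of_tendsto hcont hderiv hF'int hlim
  have hF0 : F 0 = 0 := by simp [hF]
  have hintegrand : (fun x => (x * deriv g₀ x + (1 - l * x) * g₀ x) * (l * exp (-l * x)))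
      = fun x => l * F' x := by
    funext x; simp only [hF']; ring
  rw [MeasureTheory.integral_Ici_eq_integral_Ioi, hintegrand, integral_const_mul,
    key, hF0]
  ring
end

section
/- Let p and q be positive C¹ probability densities on ℝ^d, with associated measures P and Q, and let g : ℝ^d → ℝ^d be a C¹ vector field. Assume all integrals below are finite and that ∫ ⟨∇, q(x) g(x)⟩ dx = 0 (boundary terms vanish). Then E_{X∼Q}[⟨∇ log p(X), g(X)⟩ + ⟨∇, g(X)⟩] = E_{X∼Q}[⟨∇ log p(X) - ∇ log q(X), g(X)⟩]. -/
open MeasureTheory Real Finset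

lemma grad_coord_aux {d : ℕ} (f : EuclideanSpace ℝ (Fin d) → ℝ) (x : EuclideanSpace ℝ (Fin d)) (i : Fin d) :
    gradient f x i = fderiv ℝ f x (EuclideanSpace.single i (1 : ℝ)) := by
  have h1 : gradient f x i = (inner ℝ (EuclideanSpace.single i (1:ℝ)) (gradient f x) : ℝ) := by
    rw [EuclideanSpace.inner_single_left]; simp
  rw [h1, real_inner_comm, gradient, InnerProductSpace.toDual_symm_apply]

lemma pointwise_aux
    (d : ℕ) (p q : EuclideanSpace ℝ (Fin d) → ℝ)
    (hq_pos : ∀ x, 0 < q x)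
    (hq_smooth : ContDiff ℝ 1 q)
    (g : EuclideanSpace ℝ (Fin d) → EuclideanSpace ℝ (Fin d))
    (hg : ContDiff ℝ 1 g)
    (x : EuclideanSpace ℝ (Fin d)) :
    ((∑ i, gradient (fun z => Real.log (p z)) x i * g x i)
        + ∑ i, fderiv ℝ (fun y => g y i) x (EuclideanSpace.single i (1 : ℝ))) * q x
    - (∑ i, (gradient (fun z => Real.log (p z)) x i
        - gradient (fun z => Real.log (q z)) x i) * g x i) * q x
    = ∑ i, fderiv ℝ (fun y => q y * g y i) x (EuclideanSpace.single i (1 : ℝ)) := by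
  have hqd : DifferentiableAt ℝ q x := (hq_smooth.differentiable one_ne_zero) x
  have hgd : ∀ i, DifferentiableAt ℝ (fun y => g y i) x := by
    intro i
    have h := (EuclideanSpace.proj i (𝕜 := ℝ)).differentiableAt.comp x ((hg.differentiable one_ne_zero) x)
    exact h
  have hlog : ∀ i, gradient (fun z => Real.log (q z)) x i
      = (q x)⁻¹ * fderiv ℝ q x (EuclideanSpace.single i (1:ℝ)) := by
    intro i
    rw [grad_coord_aux]
    have : HasFDerivAt (fun z => Real.log (q z)) ((q x)⁻¹ • fderiv ℝ q x) x :=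
      (hqd.hasFDerivAt).log (hq_pos x).ne'
    rw [this.fderiv]; simp
  have key : ∀ i, fderiv ℝ (fun y => q y * g y i) x (EuclideanSpace.single i (1:ℝ))
      = gradient (fun z => Real.log (q z)) x i * g x i * q x
        + fderiv ℝ (fun y => g y i) x (EuclideanSpace.single i (1:ℝ)) * q x := by
    intro i
    rw [fderiv_fun_mul hqd (hgd i), hlog i]
    have hne := (hq_pos x).ne'
    simp only [ContinuousLinearMap.add_apply, ContinuousLinearMap.smul_apply, smul_eq_mul]
    field_simp
    ring
  rw [Finset.sum_congr rfl fun i _ => key i]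
  simp only [sub_mul, Finset.sum_sub_distrib, Finset.sum_add_distrib, Finset.sum_mul, add_mul]
  ring

/-- The expectation under `Q` (density `q`) of the Langevin Stein operator for `P`
(density `p`) equals the expected inner product of the score difference with `g`. -/
theorem langevin_stein_operator_score_difference
    (d : ℕ) (p q : EuclideanSpace ℝ (Fin d) → ℝ)
    (hp_pos : ∀ x, 0 < p x) (hq_pos : ∀ x, 0 < q x)
    (hp_smooth : ContDiff ℝ 1 p) (hq_smooth : ContDiff ℝ 1 q)
    (hp_prob : ∫ x, p x = 1) (hq_prob : ∫ x, q x = 1)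
    (g : EuclideanSpace ℝ (Fin d) → EuclideanSpace ℝ (Fin d))
    (hg : ContDiff ℝ 1 g)
    (hint1 : Integrable (fun x =>
      ((∑ i, gradient (fun z => Real.log (p z)) x i * g x i)
        + ∑ i, fderiv ℝ (fun y => g y i) x (EuclideanSpace.single i (1 : ℝ))) * q x))
    (hint2 : Integrable (fun x =>
      (∑ i, (gradient (fun z => Real.log (p z)) x i
        - gradient (fun z => Real.log (q z)) x i) * g x i) * q x))
    (hdiv : ∫ x, ∑ i,
      fderiv ℝ (fun y => q y * g y i) x (EuclideanSpace.single i (1 : ℝ)) = 0) :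
    ∫ x, ((∑ i, gradient (fun z => Real.log (p z)) x i * g x i)
        + ∑ i, fderiv ℝ (fun y => g y i) x (EuclideanSpace.single i (1 : ℝ))) * q x
    = ∫ x, (∑ i, (gradient (fun z => Real.log (p z)) x i
        - gradient (fun z => Real.log (q z)) x i) * g x i) * q x := by
  have hsub := integral_sub hint1 hint2
  have hcongr : ∫ x, (((∑ i, gradient (fun z => Real.log (p z)) x i * g x i)
        + ∑ i, fderiv ℝ (fun y => g y i) x (EuclideanSpace.single i (1 : ℝ))) * q x
      - (∑ i, (gradient (fun z => Real.log (p z)) x i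
        - gradient (fun z => Real.log (q z)) x i) * g x i) * q x)
      = ∫ x, ∑ i, fderiv ℝ (fun y => q y * g y i) x (EuclideanSpace.single i (1 : ℝ)) := by
    exact integral_congr_ae (Filter.Eventually.of_forall fun x =>
      pointwise_aux d p q hq_pos hq_smooth g hg x)
  rw [hcongr, hdiv] at hsub
  linarith [hsub]
end

section
/- Let p be a positive C¹ density on ℝ. Suppose Q is a probability measure on ℝ with C¹ positive density q such that for all C¹ functions g : ℝ → ℝ with compact support, E_{X∼Q}[(log p)'(X) g(X) + g'(X)] = 0. Then (log q)' = (log p)' everywhere, and hence q = c·p for some constant c > 0; if also ∫q = ∫p = 1, then q = p. -/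
open MeasureTheory Real

/-- One-dimensional Stein characterization via the Langevin operator: if the Langevin
Stein identity for `p` holds under `Q` (density `q`) for all compactly supported `C¹`
test functions, then the score functions agree, `q` is proportional to `p`, and since
both integrate to one, `q = p`. -/
theorem langevin_stein_characterization_one_dim
    (p q : ℝ → ℝ)
    (hp_pos : ∀ x, 0 < p x) (hq_pos : ∀ x, 0 < q x)
    (hp_smooth : ContDiff ℝ 1 p) (hq_smooth : ContDiff ℝ 1 q)
    (hp_prob : ∫ x, p x = 1) (hq_prob : ∫ x, q x = 1)
    (hStein : ∀ g : ℝ → ℝ, ContDiff ℝ 1 g → HasCompactSupport g →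
      ∫ x, (deriv (fun y => Real.log (p y)) x * g x + deriv g x) * q x = 0) :
    (∀ x, deriv (fun y => Real.log (q y)) x = deriv (fun y => Real.log (p y)) x)
    ∧ (∃ c : ℝ, 0 < c ∧ ∀ x, q x = c * p x)
    ∧ q = p := by
  have hp_diff : Differentiable ℝ p := hp_smooth.differentiable one_ne_zero
  have hq_diff : Differentiable ℝ q := hq_smooth.differentiable one_ne_zero
  have hp_cont : Continuous p := hp_diff.continuous
  have hq_cont : Continuous q := hq_diff.continuous
  have hp'_cont : Continuous (deriv p) := hp_smooth.continuous_deriv le_rfl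
  have hq'_cont : Continuous (deriv q) := hq_smooth.continuous_deriv le_rfl
  -- score functions
  have hderiv_logp : ∀ x, deriv (fun y => Real.log (p y)) x = deriv p x / p x := by
    intro x
    exact (((hp_diff x).hasDerivAt).log (hp_pos x).ne').deriv
  have hderiv_logq : ∀ x, deriv (fun y => Real.log (q y)) x = deriv q x / q x := by
    intro x
    exact (((hq_diff x).hasDerivAt).log (hq_pos x).ne').deriv
  -- the function F := s_p * q - q' vanishes
  set F : ℝ → ℝ := fun x => deriv p x / p x * q x - deriv q x with hF
  have hF_cont : Continuous F :=
    ((hp'_cont.div hp_cont fun x => (hp_pos x).ne').mul hq_cont).sub hq'_cont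
  have hF_zero : ∀ x, F x = 0 := by
    have hae : ∀ᵐ x, F x = 0 := by
      apply ae_eq_zero_of_integral_contDiff_smul_eq_zero
        (hF_cont.locallyIntegrable)
      intro g hg hgsupp
      have hg1 : ContDiff ℝ 1 g := hg.of_le (by norm_num)
      have hg_cont : Continuous g := hg1.continuous
      have hg'_cont : Continuous (deriv g) := hg1.continuous_deriv le_rfl
      have hstein := hStein g hg1 hgsupp
      -- integration by parts: ∫ q * g' = - ∫ q' * g
      have hibp : ∫ x, q x * deriv g x = - ∫ x, deriv q x * g x := by
        apply MeasureTheory.integral_mul_deriv_eq_deriv_mul_of_integrable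
          (fun x _ => (hq_diff x).hasDerivAt) (fun x _ => (hg1.differentiable one_ne_zero x).hasDerivAt)
        · have hs : HasCompactSupport fun x => q x * deriv g x :=
            HasCompactSupport.mul_left hgsupp.deriv
          exact (hq_cont.mul hg'_cont).integrable_of_hasCompactSupport hs
        · have hs : HasCompactSupport fun x => deriv q x * g x :=
            HasCompactSupport.mul_left hgsupp
          exact (hq'_cont.mul hg_cont).integrable_of_hasCompactSupport hs
        · have hs : HasCompactSupport fun x => q x * g x :=
            HasCompactSupport.mul_left hgsupp
          exact (hq_cont.mul hg_cont).integrable_of_hasCompactSupport hs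
      -- split the Stein integral
      have hint1 : Integrable (fun x => deriv p x / p x * g x * q x) :=
        by
        have hs : HasCompactSupport fun x => deriv p x / p x * g x * q x :=
          HasCompactSupport.mul_right (HasCompactSupport.mul_left hgsupp)
        exact (((hp'_cont.div hp_cont fun x => (hp_pos x).ne').mul hg_cont).mul hq_cont).integrable_of_hasCompactSupport hs
      have hint2 : Integrable (fun x => deriv g x * q x) := by
        have hs : HasCompactSupport fun x => deriv g x * q x :=
          HasCompactSupport.mul_right hgsupp.deriv
        exact (hg'_cont.mul hq_cont).integrable_of_hasCompactSupport hs
      have hsplit : (∫ x, deriv p x / p x * g x * q x) + ∫ x, deriv g x * q x = 0 := by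
        rw [← integral_add hint1 hint2]
        rw [← hstein]
        congr 1
        ext x
        rw [hderiv_logp x]
        ring
      have h2 : ∫ x, deriv g x * q x = - ∫ x, deriv q x * g x := by
        simpa [mul_comm] using hibp
      rw [h2] at hsplit
      have : (∫ x, deriv p x / p x * g x * q x) = ∫ x, deriv q x * g x := by
        linarith
      calc ∫ x, g x • F x
          = ∫ x, (deriv p x / p x * g x * q x - deriv q x * g x) := by
            congr 1; ext x; simp [hF]; ring
        _ = (∫ x, deriv p x / p x * g x * q x) - ∫ x, deriv q x * g x := by
            refine integral_sub hint1 ?_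
            have hs : HasCompactSupport fun x => deriv q x * g x :=
              HasCompactSupport.mul_left hgsupp
            exact (hq'_cont.mul hg_cont).integrable_of_hasCompactSupport hs
        _ = 0 := by rw [this]; ring
    have := (hF_cont.ae_eq_iff_eq volume continuous_zero).mp hae
    intro x; exact congrFun this x
  have hq' : ∀ x, deriv q x = deriv p x / p x * q x := by
    intro x
    have := hF_zero x
    simp only [hF] at this
    linarith
  -- score equality
  have hscore : ∀ x, deriv (fun y => Real.log (q y)) x = deriv (fun y => Real.log (p y)) x := by
    intro x
    rw [hderiv_logq x, hderiv_logp x, hq' x]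
    exact mul_div_cancel_right₀ _ (hq_pos x).ne'
  -- q / p is constant
  have hratio_deriv : ∀ x, deriv (fun y => q y / p y) x = 0 := by
    intro x
    have h : HasDerivAt (fun y => q y / p y)
        ((deriv q x * p x - q x * deriv p x) / (p x ^ 2)) x :=
      ((hq_diff x).hasDerivAt).div ((hp_diff x).hasDerivAt) (hp_pos x).ne'
    rw [h.deriv, hq' x]
    have hpne := (hp_pos x).ne'
    field_simp
    ring
  have hratio_diff : Differentiable ℝ (fun y => q y / p y) :=
    hq_diff.div hp_diff fun x => (hp_pos x).ne'
  have hconst : ∀ x, q x / p x = q 0 / p 0 := fun x =>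
    is_const_of_deriv_eq_zero hratio_diff hratio_deriv x 0
  set c := q 0 / p 0 with hc
  have hc_pos : 0 < c := div_pos (hq_pos 0) (hp_pos 0)
  have hqc : ∀ x, q x = c * p x := by
    intro x
    have := hconst x
    rw [div_eq_iff (hp_pos x).ne'] at this
    linarith
  -- c = 1 from the normalizations
  have hp_int : Integrable p := by
    by_contra h
    rw [integral_undef h] at hp_prob
    norm_num at hp_prob
  have hc1 : c = 1 := by
    have : ∫ x, q x = c * ∫ x, p x := by
      calc ∫ x, q x = ∫ x, c * p x := by congr 1; ext x; exact hqc x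
        _ = c * ∫ x, p x := integral_const_mul c p
    rw [hq_prob, hp_prob] at this
    linarith
  refine ⟨hscore, ⟨c, hc_pos, hqc⟩, ?_⟩
  funext x
  rw [hqc x, hc1, one_mul]
end

section
/- Let p be a positive C¹ probability density on ℝ and H a reproducing kernel Hilbert space of C¹ functions on ℝ with reproducing kernel k that is C¹ in each argument, such that for g ∈ H, g'(x) = ⟨∂₁k(x,·), g⟩_H. Let Q be a probability measure with E_{X∼Q}[‖(log p)'(X) k(X,·) + ∂₁k(X,·)‖_H] < ∞. Then sup_{g∈H, ‖g‖_H≤1} E_{X∼Q}[(log p)'(X) g(X) + g'(X)] = ‖E_{X∼Q}[(log p)'(X) k(X,·) + ∂₁k(X,·)]‖_H. -/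
open MeasureTheory Real

/-- Closed form of the one-dimensional kernel Stein discrepancy: the supremum of the
expected Langevin Stein operator over the unit ball of the RKHS `H` equals the `H`-norm
of the mean embedding `ξ_Q = E_Q[(log p)'(X) k(X,·) + ∂₁k(X,·)]`. -/
theorem ksd_closed_form_one_dim
    (p : ℝ → ℝ) (hp_pos : ∀ x, 0 < p x) (hp_smooth : ContDiff ℝ 1 p)
    (hp_prob : ∫ x, p x = 1)
    (H : Type*) [NormedAddCommGroup H] [InnerProductSpace ℝ H] [CompleteSpace H]
    (Φ : H →ₗ[ℝ] (ℝ → ℝ))  -- inclusion of `H` as a space of functions on ℝ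
    (K K' : ℝ → H)         -- kernel sections `k(x,·)` and their derivatives `∂₁k(x,·)`
    (hΦ_smooth : ∀ g : H, ContDiff ℝ 1 (Φ g))
    (hrep : ∀ (g : H) (x : ℝ), Φ g x = (inner ℝ (K x) g : ℝ))
    (hrep' : ∀ (g : H) (x : ℝ), deriv (Φ g) x = (inner ℝ (K' x) g : ℝ))
    (Q : Measure ℝ) [IsProbabilityMeasure Q]
    (hint : Integrable
      (fun x => (deriv (fun y => Real.log (p y)) x) • K x + K' x) Q) :
    (⨆ g : {g : H // ‖g‖ ≤ 1},
        ∫ x, (deriv (fun y => Real.log (p y)) x * Φ (g : H) x + deriv (Φ (g : H)) x) ∂Q)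
      = ‖∫ x, ((deriv (fun y => Real.log (p y)) x) • K x + K' x) ∂Q‖ := by
  set s : ℝ → ℝ := fun x => deriv (fun y => Real.log (p y)) x with hs
  set ξ : H := ∫ x, (s x • K x + K' x) ∂Q with hξ
  -- Step 1: each integral equals ⟨ξ, g⟩
  have hval : ∀ g : H,
      (∫ x, (s x * Φ g x + deriv (Φ g) x) ∂Q) = (inner ℝ ξ g : ℝ) := by
    intro g
    have h1 : (fun x => s x * Φ g x + deriv (Φ g) x)
        = fun x => (inner ℝ (s x • K x + K' x) g : ℝ) := by
      funext x
      rw [hrep, hrep', inner_add_left, real_inner_smul_left]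
    rw [h1]
    have h2 : ∀ x, (inner ℝ (s x • K x + K' x) g : ℝ)
        = (innerSL ℝ g) (s x • K x + K' x) := by
      intro x; simp [real_inner_comm]
    simp_rw [h2]
    rw [ContinuousLinearMap.integral_comp_comm _ hint]
    simp [hξ, hs, real_inner_comm]
  change (⨆ g : {g : H // ‖g‖ ≤ 1}, ∫ x, (s x * Φ (g : H) x + deriv (Φ (g : H)) x) ∂Q) = ‖ξ‖
  simp_rw [hval]
  -- Step 2: sup of ⟨ξ, g⟩ over unit ball is ‖ξ‖
  have hbdd : BddAbove (Set.range fun g : {g : H // ‖g‖ ≤ 1} => (inner ℝ ξ (g : H) : ℝ)) := by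
    refine ⟨‖ξ‖, ?_⟩
    rintro _ ⟨g, rfl⟩
    calc (inner ℝ ξ (g : H) : ℝ) ≤ ‖ξ‖ * ‖(g : H)‖ := real_inner_le_norm _ _
      _ ≤ ‖ξ‖ * 1 := by gcongr; exact g.2
      _ = ‖ξ‖ := mul_one _
  have hne : Nonempty {g : H // ‖g‖ ≤ 1} := ⟨⟨0, by simp⟩⟩
  apply le_antisymm
  · apply ciSup_le
    intro g
    calc (inner ℝ ξ (g : H) : ℝ) ≤ ‖ξ‖ * ‖(g : H)‖ := real_inner_le_norm _ _
      _ ≤ ‖ξ‖ * 1 := by gcongr; exact g.2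
      _ = ‖ξ‖ := mul_one _
  · rcases eq_or_ne ξ 0 with h0 | h0
    · rw [h0, norm_zero]
      have := le_ciSup hbdd ⟨0, by simp⟩
      simpa [h0] using this
    · have hn : (0 : ℝ) < ‖ξ‖ := norm_pos_iff.mpr h0
      have hg : ‖(‖ξ‖⁻¹ • ξ)‖ ≤ 1 := by
        rw [norm_smul, norm_inv, norm_norm, inv_mul_cancel₀ hn.ne']
      have := le_ciSup hbdd ⟨‖ξ‖⁻¹ • ξ, hg⟩
      have hval2 : (inner ℝ ξ (‖ξ‖⁻¹ • ξ) : ℝ) = ‖ξ‖ := by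
        rw [real_inner_smul_right, real_inner_self_eq_norm_sq]
        field_simp
      rw [← hval2]
      exact this
end
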